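/- Let E be a real inner product space, let N be a nonempty finite set of clients with |N| = N, and let M ⊆ N be a nonempty subset with weights γ : M → ℕ satisfying Σ_{n∈M} γ_n = N. For each client n let F_n : E → ℝ be differentiable with L-Lipschitz gradient, and let (y_n^j)_{j≥0} be points in E with ‖y_n^j − y_n^0‖ ≤ j·η·G for constants η > 0, G ≥ 0. Define the approximation error at iteration 0 as α = ‖(1/N)·Σ_{n∈M} γ_n·∇F_n(y_n^0) − (1/N)·Σ_{n∈N} ∇F_n(y_n^0)‖. Then for every j, ‖(1/N)·Σ_{n∈M} γ_n·∇F_n(y_n^j) − (1/N)·Σ_{n∈N} ∇F_n(y_n^j)‖ ≤ 2·L·G·j·η + α. -/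

import Mathlib

/-- Step (b) of Lemma 1: the per-iteration approximation error of the weighted
selected-subset gradient aggregate drifts from its initial value `α` by at most
`2·L·G·j·η` after `j` local iterations, when each `F n` has `L`-Lipschitz gradient
and the local iterates satisfy `‖y n j - y n 0‖ ≤ j·η·G`. -/
theorem approximation_error_drift_bound
    {E : Type*} [NormedAddCommGroup E] [InnerProductSpace ℝ E] [CompleteSpace E]
    {ι : Type*} [Fintype ι] [Nonempty ι]
    (N : ℕ) (hN : Fintype.card ι = N)
    (M : Finset ι) (hM : M.Nonempty)
    (γ : ι → ℕ) (hγ : ∑ n ∈ M, γ n = N)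
    (F : ι → E → ℝ) (hF : ∀ n, Differentiable ℝ (F n))
    (L : ℝ) (hL : 0 ≤ L)
    (hLip : ∀ n, ∀ x y : E, ‖gradient (F n) x - gradient (F n) y‖ ≤ L * ‖x - y‖)
    (η : ℝ) (hη : 0 < η) (G : ℝ) (hG : 0 ≤ G)
    (y : ι → ℕ → E) (hy : ∀ n, ∀ j : ℕ, ‖y n j - y n 0‖ ≤ (j : ℝ) * η * G)
    (α : ℝ)
    (hα : α = ‖(1 / (N : ℝ)) • ∑ n ∈ M, (γ n : ℝ) • gradient (F n) (y n 0) -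
              (1 / (N : ℝ)) • ∑ n, gradient (F n) (y n 0)‖) :
    ∀ j : ℕ, ‖(1 / (N : ℝ)) • ∑ n ∈ M, (γ n : ℝ) • gradient (F n) (y n j) -
        (1 / (N : ℝ)) • ∑ n, gradient (F n) (y n j)‖ ≤
      2 * L * G * (j : ℝ) * η + α := by
  intro j
  have hNpos : 0 < N := hN ▸ Fintype.card_pos
  have hNR : (0:ℝ) < (N:ℝ) := by exact_mod_cast hNpos
  set g : ι → ℕ → E := fun n k => gradient (F n) (y n k) with hg
  set c : ℝ := 1 / (N:ℝ) with hc
  have hcpos : 0 < c := by positivity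
  -- per-term bound
  have hterm : ∀ n, ‖g n j - g n 0‖ ≤ L * ((j:ℝ) * η * G) := by
    intro n
    calc ‖g n j - g n 0‖ ≤ L * ‖y n j - y n 0‖ := hLip n _ _
      _ ≤ L * ((j:ℝ) * η * G) := by
          apply mul_le_mul_of_nonneg_left (hy n j) hL
  have h1 : ‖∑ n ∈ M, (γ n : ℝ) • (g n j - g n 0)‖ ≤ (N:ℝ) * (L * ((j:ℝ) * η * G)) := by
    calc ‖∑ n ∈ M, (γ n : ℝ) • (g n j - g n 0)‖
        ≤ ∑ n ∈ M, ‖(γ n : ℝ) • (g n j - g n 0)‖ := norm_sum_le _ _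
      _ ≤ ∑ n ∈ M, (γ n : ℝ) * (L * ((j:ℝ) * η * G)) := by
          apply Finset.sum_le_sum
          intro n _
          rw [norm_smul, Real.norm_eq_abs, abs_of_nonneg (Nat.cast_nonneg _)]
          exact mul_le_mul_of_nonneg_left (hterm n) (Nat.cast_nonneg _)
      _ = (N:ℝ) * (L * ((j:ℝ) * η * G)) := by
          rw [← Finset.sum_mul]
          congr 1
          exact_mod_cast hγ
  have h2 : ‖∑ n, (g n j - g n 0)‖ ≤ (N:ℝ) * (L * ((j:ℝ) * η * G)) := by
    calc ‖∑ n, (g n j - g n 0)‖ ≤ ∑ n, ‖g n j - g n 0‖ := norm_sum_le _ _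
      _ ≤ ∑ _n : ι, L * ((j:ℝ) * η * G) := Finset.sum_le_sum fun n _ => hterm n
      _ = (N:ℝ) * (L * ((j:ℝ) * η * G)) := by
          rw [Finset.sum_const, nsmul_eq_mul, Finset.card_univ, hN]
  have key : c • ∑ n ∈ M, (γ n : ℝ) • g n j - c • ∑ n, g n j =
      (c • ∑ n ∈ M, (γ n : ℝ) • g n 0 - c • ∑ n, g n 0) +
      c • (∑ n ∈ M, (γ n : ℝ) • (g n j - g n 0)) - c • (∑ n, (g n j - g n 0)) := by
    simp only [smul_sub, Finset.smul_sum, Finset.sum_sub_distrib]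
    abel
  have hbound : ‖c • ∑ n ∈ M, (γ n : ℝ) • g n j - c • ∑ n, g n j‖ ≤
      α + c * ((N:ℝ) * (L * ((j:ℝ) * η * G))) + c * ((N:ℝ) * (L * ((j:ℝ) * η * G))) := by
    rw [key]
    refine le_trans (norm_sub_le _ _) ?_
    refine add_le_add (le_trans (norm_add_le _ _) (add_le_add (le_of_eq hα.symm) ?_)) ?_
    · rw [norm_smul, Real.norm_eq_abs, abs_of_pos hcpos]
      exact mul_le_mul_of_nonneg_left h1 hcpos.le
    · rw [norm_smul, Real.norm_eq_abs, abs_of_pos hcpos]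
      exact mul_le_mul_of_nonneg_left h2 hcpos.le
  have hcN : c * (N:ℝ) = 1 := by
    rw [hc, one_div, inv_mul_cancel₀ hNR.ne']
  calc ‖c • ∑ n ∈ M, (γ n : ℝ) • g n j - c • ∑ n, g n j‖
      ≤ α + c * ((N:ℝ) * (L * ((j:ℝ) * η * G))) + c * ((N:ℝ) * (L * ((j:ℝ) * η * G))) := hbound
    _ = 2 * L * G * (j:ℝ) * η + α := by
        rw [← mul_assoc, ← mul_assoc, hcN]
        ring
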